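/- Fix μ, ρ > 0. For a positive integer m₀ put α = e^{−1/m₀}, β = e^{−ρ/m₀}, and define Δ_U(m₀) = (2ρm₀+4m₀+ρ+1)/(2μm₀(1+ρ)) + (1+β)/(2μm₀(1+ρ)(1−β)) + ρ(8m₀³+18m₀²+13m₀+3)/(12μm₀³(1+ρ)), Δ_M(m₀) = (2+ρ)/(μ(1+ρ)) + ρ(1+α)/(2μm₀(1+ρ)(1−α)) + (1+β)/(2μm₀(1+ρ)(1−β)), and Δ_D(m₀) = (4+3ρ)/(2μ(1+ρ)) + (1+β)/(2μm₀(1+ρ)(1−β)). Then there exists a positive integer m₀* such that for every positive integer m₀: if m₀ > m₀* then Δ_D(m₀) < Δ_U(m₀) < Δ_M(m₀), and if m₀ ≤ m₀* then Δ_D(m₀) < Δ_M(m₀) ≤ Δ_U(m₀). -/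

import Mathlib

open Real

/-- Approximate average AuD of the M/U/1/1-D bufferless system. -/
noncomputable def ΔU (mu rho m₀ : ℝ) : ℝ :=
  (2 * rho * m₀ + 4 * m₀ + rho + 1) / (2 * mu * m₀ * (1 + rho))
    + (1 + Real.exp (-rho / m₀)) / (2 * mu * m₀ * (1 + rho) * (1 - Real.exp (-rho / m₀)))
    + rho * (8 * m₀ ^ 3 + 18 * m₀ ^ 2 + 13 * m₀ + 3) / (12 * mu * m₀ ^ 3 * (1 + rho))

/-- Approximate average AuD of the M/M/1/1-D bufferless system. -/
noncomputable def ΔM (mu rho m₀ : ℝ) : ℝ :=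
  (2 + rho) / (mu * (1 + rho))
    + rho * (1 + Real.exp (-1 / m₀)) / (2 * mu * m₀ * (1 + rho) * (1 - Real.exp (-1 / m₀)))
    + (1 + Real.exp (-rho / m₀)) / (2 * mu * m₀ * (1 + rho) * (1 - Real.exp (-rho / m₀)))

/-- Approximate average AuD of the M/D/1/1-D bufferless system. -/
noncomputable def ΔD (mu rho m₀ : ℝ) : ℝ :=
  (4 + 3 * rho) / (2 * mu * (1 + rho))
    + (1 + Real.exp (-rho / m₀)) / (2 * mu * m₀ * (1 + rho) * (1 - Real.exp (-rho / m₀)))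

/-- There exists a positive integer threshold `m₀*` such that for every positive integer `m₀`:
if `m₀ > m₀*` then `Δ_D(m₀) < Δ_U(m₀) < Δ_M(m₀)`, and if `m₀ ≤ m₀*` then
`Δ_D(m₀) < Δ_M(m₀) ≤ Δ_U(m₀)`. -/

lemma aux1 (x : ℝ) (hx : 0 < x) : Real.sinh x < x * Real.cosh x := by
  have key : StrictMonoOn (fun y : ℝ => y * Real.cosh y - Real.sinh y) (Set.Ici 0) := by
    apply strictMonoOn_of_deriv_pos (convex_Ici 0)
    · exact (Continuous.continuousOn (by continuity))
    · intro y hy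
      rw [interior_Ici] at hy
      have h1 : HasDerivAt (fun y : ℝ => y * Real.cosh y - Real.sinh y) (y * Real.sinh y) y := by
        have := ((hasDerivAt_id y).mul (Real.hasDerivAt_cosh y)).sub (Real.hasDerivAt_sinh y)
        refine this.congr_deriv ?_
        simp only [id_eq]
        ring
      rw [h1.deriv]
      exact mul_pos hy (by simpa using Real.sinh_pos_iff.mpr hy)
  have h0 : (0:ℝ) ∈ Set.Ici (0:ℝ) := Set.mem_Ici.mpr (le_refl 0)
  have hxi : x ∈ Set.Ici (0:ℝ) := le_of_lt hx
  have := key h0 hxi hx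
  simp only [Real.cosh_zero, Real.sinh_zero, mul_one, zero_mul] at this
  linarith

lemma aux2 (x : ℝ) (hx : 0 < x) : 3 * x * Real.cosh x < (3 + x ^ 2) * Real.sinh x := by
  have key : StrictMonoOn (fun y : ℝ => (3 + y ^ 2) * Real.sinh y - 3 * y * Real.cosh y) (Set.Ici 0) := by
    apply strictMonoOn_of_deriv_pos (convex_Ici 0)
    · exact (Continuous.continuousOn (by continuity))
    · intro y hy
      rw [interior_Ici] at hy
      have h1 : HasDerivAt (fun y : ℝ => (3 + y ^ 2) * Real.sinh y - 3 * y * Real.cosh y)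
          (y * (y * Real.cosh y - Real.sinh y)) y := by
        have hd1 : HasDerivAt (fun y : ℝ => (3 + y ^ 2)) (2 * y) y := by
          simpa using ((hasDerivAt_pow 2 y).const_add 3)
        have := (hd1.mul (Real.hasDerivAt_sinh y)).sub
          (((hasDerivAt_id y).const_mul 3).mul (Real.hasDerivAt_cosh y))
        refine this.congr_deriv ?_
        simp only [id_eq]
        ring
      rw [h1.deriv]
      exact mul_pos hy (by linarith [aux1 y hy])
  have h0 : (0:ℝ) ∈ Set.Ici (0:ℝ) := Set.mem_Ici.mpr (le_refl 0)
  have hxi : x ∈ Set.Ici (0:ℝ) := le_of_lt hx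
  have := key h0 hxi hx
  simp only [Real.sinh_zero, Real.cosh_zero, mul_zero, zero_mul, mul_one] at this
  linarith

lemma coth_bounds (m : ℝ) (hm : 0 < m) :
    2 * m * (1 - Real.exp (-1 / m)) < 1 + Real.exp (-1 / m) ∧
    1 + Real.exp (-1 / m) < (2 * m + 1 / (6 * m)) * (1 - Real.exp (-1 / m)) := by
  set x : ℝ := 1 / (2 * m) with hx
  have hx0 : 0 < x := by positivity
  have hxm : 2 * m * x = 1 := by rw [hx]; field_simp
  have hexp : Real.exp (-1 / m) = Real.exp (-x) * Real.exp (-x) := by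
    rw [← Real.exp_add]; congr 1; rw [hx]; field_simp; ring
  have hE : Real.exp x * Real.exp (-x) = 1 := by
    rw [← Real.exp_add]; simp
  have hA : 0 < Real.exp (-x) := Real.exp_pos _
  have h1 := aux1 x hx0
  have h2 := aux2 x hx0
  rw [Real.sinh_eq, Real.cosh_eq] at h1 h2
  set E := Real.exp x
  set A := Real.exp (-x)
  have id1 : 1 - A * A = A * (E - A) := by linear_combination -hE
  have id2 : 1 + A * A = A * (E + A) := by linear_combination -hE
  have key1 : E - A < x * (E + A) := by linarith
  have key2 : 3 * x * (E + A) < (3 + x ^ 2) * (E - A) := by linarith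
  constructor
  · rw [hexp, id1, id2]
    have step : 2 * m * (E - A) < E + A := by
      calc 2 * m * (E - A) < 2 * m * (x * (E + A)) := by
            exact mul_lt_mul_of_pos_left key1 (by linarith)
        _ = (2 * m * x) * (E + A) := by ring
        _ = E + A := by rw [hxm]; ring
    calc 2 * m * (A * (E - A)) = A * (2 * m * (E - A)) := by ring
      _ < A * (E + A) := mul_lt_mul_of_pos_left step hA
  · rw [hexp, id1, id2]
    have idc : 3 * x * (2 * m + 1 / (6 * m)) = 3 + x ^ 2 := by
      rw [hx]; field_simp; ring
    have step : E + A < (2 * m + 1 / (6 * m)) * (E - A) := by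
      have h3x : 0 < 3 * x := by linarith
      rw [← mul_lt_mul_iff_right₀ h3x]
      calc 3 * x * (E + A) < (3 + x ^ 2) * (E - A) := key2
        _ = 3 * x * ((2 * m + 1 / (6 * m)) * (E - A)) := by rw [← idc]; ring
    calc A * (E + A) < A * ((2 * m + 1 / (6 * m)) * (E - A)) := mul_lt_mul_of_pos_left step hA
      _ = (2 * m + 1 / (6 * m)) * (A * (E - A)) := by ring

lemma one_sub_exp_pos (m r : ℝ) (hm : 0 < m) (hr : 0 < r) : (0:ℝ) < 1 - Real.exp (-r / m) := by
  have h : -r / m < 0 := by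
    apply div_neg_of_neg_of_pos (by linarith) hm
  linarith [Real.exp_lt_one_iff.mpr h]

noncomputable def fMU (rho m : ℝ) : ℝ :=
  rho * (1 + Real.exp (-1 / m)) / (m * (1 - Real.exp (-1 / m)))
    - 4 * rho / 3 - (4 * rho + 1) / m - 13 * rho / (6 * m ^ 2) - rho / (2 * m ^ 3)

noncomputable def fL (rho m : ℝ) : ℝ :=
  2 * rho / 3 - (4 * rho + 1) / m - 13 * rho / (6 * m ^ 2) - rho / (2 * m ^ 3)

lemma eqMU (mu rho m : ℝ) (hmu : 0 < mu) (hrho : 0 < rho) (hm : 0 < m) :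
    ΔM mu rho m - ΔU mu rho m = fMU rho m / (2 * mu * (1 + rho)) := by
  have h1 := one_sub_exp_pos m 1 hm one_pos
  have h2 := one_sub_exp_pos m rho hm hrho
  have h1' : 1 - Real.exp (-1 / m) ≠ 0 := ne_of_gt h1
  have h2' : 1 - Real.exp (-rho / m) ≠ 0 := ne_of_gt h2
  have hm' : m ≠ 0 := ne_of_gt hm
  have hmu' : mu ≠ 0 := ne_of_gt hmu
  have hrho' : (1:ℝ) + rho ≠ 0 := by positivity
  unfold ΔM ΔU fMU
  field_simp
  ring

lemma hDU (mu rho m : ℝ) (hmu : 0 < mu) (hrho : 0 < rho) (hm : 0 < m) :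
    ΔD mu rho m < ΔU mu rho m := by
  have h2 := one_sub_exp_pos m rho hm hrho
  have key : ΔU mu rho m - ΔD mu rho m
      = (2 * rho * m ^ 3 + (24 * rho + 6) * m ^ 2 + 13 * rho * m + 3 * rho)
        / (12 * mu * m ^ 3 * (1 + rho)) := by
    have h2' : 1 - Real.exp (-rho / m) ≠ 0 := ne_of_gt h2
    have hm' : m ≠ 0 := ne_of_gt hm
    have hmu' : mu ≠ 0 := ne_of_gt hmu
    have hrho' : (1:ℝ) + rho ≠ 0 := by positivity
    unfold ΔU ΔD
    field_simp
    ring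
  have : 0 < (2 * rho * m ^ 3 + (24 * rho + 6) * m ^ 2 + 13 * rho * m + 3 * rho)
        / (12 * mu * m ^ 3 * (1 + rho)) := by positivity
  linarith

lemma hDM (mu rho m : ℝ) (hmu : 0 < mu) (hrho : 0 < rho) (hm : 0 < m) :
    ΔD mu rho m < ΔM mu rho m := by
  have h1 := one_sub_exp_pos m 1 hm one_pos
  have hcb := (coth_bounds m hm).1
  have key : ΔM mu rho m - ΔD mu rho m
      = rho * ((1 + Real.exp (-1 / m)) - m * (1 - Real.exp (-1 / m)))
        / (2 * mu * m * (1 + rho) * (1 - Real.exp (-1 / m))) := by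
    have h2 := one_sub_exp_pos m rho hm hrho
    have h1' : 1 - Real.exp (-1 / m) ≠ 0 := ne_of_gt h1
    have h2' : 1 - Real.exp (-rho / m) ≠ 0 := ne_of_gt h2
    have hm' : m ≠ 0 := ne_of_gt hm
    have hmu' : mu ≠ 0 := ne_of_gt hmu
    have hrho' : (1:ℝ) + rho ≠ 0 := by positivity
    unfold ΔM ΔD
    field_simp
    have hinv : (1 - Real.exp (-m⁻¹)) * (1 - Real.exp (-m⁻¹))⁻¹ = 1 := by
      apply mul_inv_cancel₀
      have e : -1 / m = -m⁻¹ := by ring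
      rw [← e]; exact h1'
    simp only [one_div]
    linear_combination (rho * m) * hinv
  have hnum : 0 < (1 + Real.exp (-1 / m)) - m * (1 - Real.exp (-1 / m)) := by
    nlinarith [mul_pos hm h1]
  have : 0 < rho * ((1 + Real.exp (-1 / m)) - m * (1 - Real.exp (-1 / m)))
        / (2 * mu * m * (1 + rho) * (1 - Real.exp (-1 / m))) := by positivity
  linarith

lemma fMU_bounds (rho m : ℝ) (hrho : 0 < rho) (hm : 0 < m) :
    fL rho m < fMU rho m ∧ fMU rho m < fL rho m + rho / (6 * m ^ 2) := by
  obtain ⟨hlo, hhi⟩ := coth_bounds m hm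
  have h1 := one_sub_exp_pos m 1 hm one_pos
  have hden : 0 < m * (1 - Real.exp (-1 / m)) := mul_pos hm h1
  set q : ℝ := (1 + Real.exp (-1 / m)) / (m * (1 - Real.exp (-1 / m))) with hq
  have hql : 2 < q := by
    rw [hq, lt_div_iff₀ hden]
    nlinarith [hlo]
  have hqu : q < 2 + 1 / (6 * m ^ 2) := by
    rw [hq, div_lt_iff₀ hden]
    have hm' : m ≠ 0 := ne_of_gt hm
    have hid2 : (2 + 1 / (6 * m ^ 2)) * (m * (1 - Real.exp (-1 / m)))
        = (2 * m + 1 / (6 * m)) * (1 - Real.exp (-1 / m)) := by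
      field_simp
    linarith [hhi, hid2]
  have hfq : fMU rho m = rho * q + (fL rho m - 2 * rho) := by
    unfold fMU fL
    rw [hq]
    ring
  constructor
  · rw [hfq]
    nlinarith [mul_lt_mul_of_pos_left hql hrho]
  · rw [hfq]
    have := mul_lt_mul_of_pos_left hqu hrho
    have hid : rho * (2 + 1 / (6 * m ^ 2)) = 2 * rho + rho / (6 * m ^ 2) := by
      field_simp
    linarith [this, hid.le]

lemma fMU_mono (rho m1 m2 : ℝ) (hrho : 0 < rho) (h1 : 1 ≤ m1) (h2 : m1 + 1 ≤ m2) :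
    fMU rho m1 < fMU rho m2 := by
  have hm1 : 0 < m1 := by linarith
  have hm2 : 0 < m2 := by linarith
  have hle : m1 ≤ m2 := by linarith
  obtain ⟨_, hub⟩ := fMU_bounds rho m1 hrho hm1
  obtain ⟨hlb, _⟩ := fMU_bounds rho m2 hrho hm2
  -- suffices: fL rho m1 + rho/(6 m1^2) ≤ fL rho m2
  have k2 : 13 * rho / (6 * m2 ^ 2) ≤ 13 * rho / (6 * m1 ^ 2) := by
    gcongr
  have k3 : rho / (2 * m2 ^ 3) ≤ rho / (2 * m1 ^ 3) := by
    gcongr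
  have k1 : rho / (6 * m1 ^ 2) ≤ (4 * rho + 1) / m1 - (4 * rho + 1) / m2 := by
    have e : (4 * rho + 1) / m1 - (4 * rho + 1) / m2 = (4 * rho + 1) * (m2 - m1) / (m1 * m2) := by
      field_simp
    rw [e, div_le_div_iff₀ (by positivity) (by positivity)]
    have h24 : 0 ≤ 24 * m1 * (m2 - m1) - m2 := by
      nlinarith [mul_nonneg (by linarith : (0:ℝ) ≤ m1) (by linarith : (0:ℝ) ≤ m2 - m1 - 1),
        mul_nonneg (by linarith : (0:ℝ) ≤ m1 - 1) (by linarith : (0:ℝ) ≤ m2 - m1),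
        mul_nonneg (by linarith : (0:ℝ) ≤ m1) (by linarith : (0:ℝ) ≤ m2 - m1)]
    have h24' : 0 ≤ rho * (m1 * (24 * m1 * (m2 - m1) - m2)) :=
      mul_nonneg hrho.le (mul_nonneg hm1.le h24)
    nlinarith [mul_nonneg (mul_nonneg hm1.le hm1.le) (by linarith : (0:ℝ) ≤ m2 - m1)]
  have key : fL rho m1 + rho / (6 * m1 ^ 2) ≤ fL rho m2 := by
    unfold fL
    linarith [k1, k2, k3]
  linarith

lemma fMU_one_neg (rho : ℝ) (hrho : 0 < rho) : fMU rho 1 < 0 := by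
  obtain ⟨_, hub⟩ := fMU_bounds rho 1 hrho one_pos
  have : fL rho 1 + rho / (6 * 1 ^ 2) < 0 := by
    unfold fL
    norm_num
    linarith
  linarith

lemma fMU_pos_big (rho m : ℝ) (hrho : 0 < rho) (h1 : 1 ≤ m) (h2 : 40 * rho + 6 < 4 * rho * m) :
    0 < fMU rho m := by
  have hm : 0 < m := by linarith
  obtain ⟨hlb, _⟩ := fMU_bounds rho m hrho hm
  have key : 0 < fL rho m := by
    have hfl : fL rho m = (4 * rho * m ^ 3 - (24 * rho + 6) * m ^ 2 - 13 * rho * m - 3 * rho)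
        / (6 * m ^ 3) := by
      unfold fL
      field_simp
      ring
    rw [hfl]
    apply div_pos _ (by positivity)
    nlinarith [mul_pos hm hm, mul_le_mul_of_nonneg_left (h2.le) (mul_pos hm hm).le,
      mul_nonneg (mul_nonneg hrho.le hm.le) (by linarith : (0:ℝ) ≤ m - 1),
      mul_nonneg hrho.le (by nlinarith : (0:ℝ) ≤ m^2 - m), mul_nonneg hrho.le (by nlinarith : (0:ℝ) ≤ m^2 - 1)]
  linarith

theorem stmt_14 (mu rho : ℝ) (hmu : 0 < mu) (hrho : 0 < rho) :
    ∃ m₀star : ℕ, 0 < m₀star ∧ ∀ m₀ : ℕ, 0 < m₀ →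
      ((m₀star < m₀ →
          ΔD mu rho (m₀ : ℝ) < ΔU mu rho (m₀ : ℝ) ∧ ΔU mu rho (m₀ : ℝ) < ΔM mu rho (m₀ : ℝ)) ∧
       (m₀ ≤ m₀star →
          ΔD mu rho (m₀ : ℝ) < ΔM mu rho (m₀ : ℝ) ∧ ΔM mu rho (m₀ : ℝ) ≤ ΔU mu rho (m₀ : ℝ))) := by
  classical
  set N : ℕ := ⌈(40 * rho + 6) / (4 * rho)⌉₊ + 1 with hN
  set S : Finset ℕ := (Finset.Icc 1 N).filter (fun n => fMU rho (n : ℝ) ≤ 0) with hS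
  have h1S : 1 ∈ S := by
    rw [hS, Finset.mem_filter, Finset.mem_Icc]
    refine ⟨⟨le_refl 1, by omega⟩, ?_⟩
    push_cast
    exact (fMU_one_neg rho hrho).le
  have hSne : S.Nonempty := ⟨1, h1S⟩
  refine ⟨S.max' hSne, lt_of_lt_of_le one_pos (Finset.le_max' S 1 h1S), ?_⟩
  obtain ⟨hstarIcc, hstarf⟩ := Finset.mem_filter.mp (S.max'_mem hSne)
  obtain ⟨hstar1, hstarN⟩ := Finset.mem_Icc.mp hstarIcc
  intro m hm
  have hmR : (0:ℝ) < (m : ℝ) := by exact_mod_cast hm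
  constructor
  · intro hgt
    refine ⟨hDU mu rho m hmu hrho hmR, ?_⟩
    have hf : 0 < fMU rho (m : ℝ) := by
      by_cases hmN : N < m
      · apply fMU_pos_big rho (m : ℝ) hrho (by exact_mod_cast hm)
        have hceil : (40 * rho + 6) / (4 * rho) ≤ (⌈(40 * rho + 6) / (4 * rho)⌉₊ : ℝ) :=
          Nat.le_ceil _
        have hmN' : ((N : ℝ)) < (m : ℝ) := by exact_mod_cast hmN
        have hNval : (40 * rho + 6) / (4 * rho) < (N : ℝ) := by
          rw [hN]
          push_cast
          linarith
        have : (40 * rho + 6) / (4 * rho) < (m : ℝ) := lt_trans hNval hmN'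
        have h4 : 0 < 4 * rho := by linarith
        calc 40 * rho + 6 = (40 * rho + 6) / (4 * rho) * (4 * rho) := by field_simp
          _ < (m : ℝ) * (4 * rho) := by
              exact mul_lt_mul_of_pos_right this h4
          _ = 4 * rho * (m : ℝ) := by ring
      · push_neg at hmN
        by_contra hc
        push_neg at hc
        have hmem : m ∈ S := by
          rw [hS, Finset.mem_filter, Finset.mem_Icc]
          exact ⟨⟨hm, hmN⟩, hc⟩
        have := Finset.le_max' S m hmem
        omega
    have heq := eqMU mu rho (m : ℝ) hmu hrho hmR
    have : 0 < fMU rho (m : ℝ) / (2 * mu * (1 + rho)) := by positivity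
    linarith
  · intro hle
    refine ⟨hDM mu rho m hmu hrho hmR, ?_⟩
    have hf : fMU rho (m : ℝ) ≤ 0 := by
      rcases eq_or_lt_of_le hle with h | h
      · rw [h]
        exact hstarf
      · have hcast : ((m : ℝ) + 1) ≤ ((S.max' hSne : ℕ) : ℝ) := by
          have : m + 1 ≤ S.max' hSne := h
          exact_mod_cast this
        have := fMU_mono rho (m : ℝ) ((S.max' hSne : ℕ) : ℝ) hrho (by exact_mod_cast hm) hcast
        linarith
    have heq := eqMU mu rho (m : ℝ) hmu hrho hmR
    have hd : 0 < 2 * mu * (1 + rho) := by positivity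
    have : fMU rho (m : ℝ) / (2 * mu * (1 + rho)) ≤ 0 := div_nonpos_of_nonpos_of_nonneg hf hd.le
    linarith
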